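/- With the setup of the randomized matrix multiplication estimator X = (1/s)·∑_{t=1}^s (1/p_{i_t})·A_{i_t} B^{i_t} for estimating AB from s i.i.d. index samples drawn with probabilities p₁,...,p_n > 0, the sum of the variances of all entries of X satisfies Var(X) ≤ (1/s)·∑_{i=1}^n (1/p_i)·‖A_i‖²·‖B^i‖², where ‖A_i‖ is the Euclidean norm of the i-th column of A and ‖B^i‖ the Euclidean norm of the i-th row of B. -/

import Mathlib

lemma sum_prod_fn {s n : ℕ} (w : Fin s → Fin n → ℝ) :
    ∑ f : Fin s → Fin n, ∏ t, w t (f t) = ∏ t, ∑ i, w t i :=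
  (Fintype.prod_sum w).symm

lemma key_var {n s : ℕ} (hs : 0 < s) (q g : Fin n → ℝ) (hq1 : ∑ i, q i = 1) :
    ∑ f : Fin s → Fin n, (∏ t, q (f t)) *
        ((1 / (s : ℝ)) * (∑ t, g (f t)) - ∑ i, q i * g i) ^ 2
      = (1 / (s : ℝ)) * ((∑ i, q i * g i ^ 2) - (∑ i, q i * g i) ^ 2) := by
  have hsR : (s : ℝ) ≠ 0 := Nat.cast_ne_zero.mpr hs.ne'
  set μ : ℝ := ∑ i, q i * g i with hμ
  set h : Fin n → ℝ := fun i => g i - μ with hh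
  have hqh : ∑ i, q i * h i = 0 := by
    simp only [hh, mul_sub]
    rw [Finset.sum_sub_distrib, ← Finset.sum_mul, hq1, one_mul, sub_self]
  have step1 : ∀ f : Fin s → Fin n,
      (1 / (s : ℝ)) * (∑ t, g (f t)) - μ = (1 / (s : ℝ)) * (∑ t, h (f t)) := by
    intro f
    simp only [hh]
    rw [Finset.sum_sub_distrib, Finset.sum_const, Finset.card_univ, Fintype.card_fin]
    field_simp
    rw [nsmul_eq_mul]
  have expand : ∀ f : Fin s → Fin n,
      (∏ t, q (f t)) * ((1 / (s : ℝ)) * (∑ t, g (f t)) - μ) ^ 2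
        = (1 / (s : ℝ)) ^ 2 * ∑ t1, ∑ t2, ((∏ t, q (f t)) * (h (f t1) * h (f t2))) := by
    intro f
    have hsq : (∑ t, h (f t)) ^ 2 = ∑ t1, ∑ t2, h (f t1) * h (f t2) := by
      rw [sq, Finset.sum_mul_sum]
    rw [step1 f, mul_pow, hsq]
    simp only [Finset.mul_sum]
    exact Finset.sum_congr rfl fun t1 _ => Finset.sum_congr rfl fun t2 _ => by ring
  simp only [expand]
  rw [← Finset.mul_sum]
  have swap : (∑ f : Fin s → Fin n, ∑ t1 : Fin s, ∑ t2 : Fin s,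
        (∏ t, q (f t)) * (h (f t1) * h (f t2)))
      = ∑ t1 : Fin s, ∑ t2 : Fin s, ∑ f : Fin s → Fin n,
        (∏ t, q (f t)) * (h (f t1) * h (f t2)) := by
    rw [Finset.sum_comm]
    exact Finset.sum_congr rfl fun t1 _ => Finset.sum_comm
  rw [swap]
  have main : ∀ t1 t2 : Fin s,
      ∑ f : Fin s → Fin n, (∏ t, q (f t)) * (h (f t1) * h (f t2))
        = if t1 = t2 then ∑ i, q i * h i ^ 2 else 0 := by
    intro t1 t2
    have hfac : ∀ f : Fin s → Fin n,
        (∏ t, q (f t)) * (h (f t1) * h (f t2))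
          = ∏ t, (q (f t) * (if t = t1 then h (f t) else 1)
              * (if t = t2 then h (f t) else 1)) := by
      intro f
      rw [Finset.prod_mul_distrib, Finset.prod_mul_distrib,
        Finset.prod_ite_eq' Finset.univ t1 (fun t => h (f t)),
        Finset.prod_ite_eq' Finset.univ t2 (fun t => h (f t))]
      simp [mul_assoc]
    simp only [hfac]
    rw [sum_prod_fn (fun t i => q i * (if t = t1 then h i else 1)
        * (if t = t2 then h i else 1))]
    by_cases he : t1 = t2
    · subst he
      simp only [if_pos rfl]
      have : ∀ t : Fin s, (∑ i, q i * (if t = t1 then h i else 1)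
          * (if t = t1 then h i else 1)) = if t = t1 then ∑ i, q i * h i ^ 2 else 1 := by
        intro t
        by_cases ht : t = t1 <;> simp [ht, hq1, sq, mul_assoc]
      simp only [this]
      rw [Finset.prod_ite_eq' Finset.univ t1 (fun _ => ∑ i, q i * h i ^ 2)]
      simp
    · rw [if_neg he]
      apply Finset.prod_eq_zero (Finset.mem_univ t1)
      simp only [if_pos rfl, if_neg he]
      simpa using hqh
  simp only [main]
  have hV : ∑ i, q i * h i ^ 2 = ∑ i, q i * g i ^ 2 - μ ^ 2 := by
    have hterm : ∀ i, q i * h i ^ 2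
        = q i * g i ^ 2 - 2 * μ * (q i * g i) + μ ^ 2 * q i := by
      intro i; simp only [hh]; ring
    simp only [hterm]
    rw [Finset.sum_add_distrib, Finset.sum_sub_distrib, ← Finset.mul_sum,
      ← Finset.mul_sum, hq1, ← hμ]
    ring
  simp only [Finset.sum_ite_eq, Finset.mem_univ, if_pos, Finset.sum_const,
    Finset.card_univ, Fintype.card_fin, nsmul_eq_mul]
  rw [hV]
  field_simp

lemma triple_swap {m n p : ℕ} (c : Fin n → ℝ) (a : Fin m → Fin n → ℝ)
    (b : Fin n → Fin p → ℝ) :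
    ∑ j, ∑ k, ∑ i, c i * (a j i * b i k)
      = ∑ i, c i * ((∑ j, a j i) * (∑ k, b i k)) := by
  have h1 : ∑ j : Fin m, ∑ k : Fin p, ∑ i : Fin n, c i * (a j i * b i k)
      = ∑ i : Fin n, ∑ j : Fin m, ∑ k : Fin p, c i * (a j i * b i k) :=
    (Finset.sum_congr rfl fun j _ => Finset.sum_comm).trans Finset.sum_comm
  rw [h1]
  refine Finset.sum_congr rfl fun i _ => ?_
  rw [Finset.sum_mul_sum, Finset.mul_sum]
  refine Finset.sum_congr rfl fun j _ => ?_
  rw [Finset.mul_sum]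

/-- **Variance bound for the sampled matrix-product estimator.** With `s` i.i.d. indices
drawn with probabilities `q i > 0` (`∑ q = 1`) and
`X = (1/s) ∑_t (1/q_{i_t}) A_{i_t} B^{i_t}`, the total variance (sum over all entries,
i.e. `E ‖X - AB‖_F²`) is at most `(1/s) ∑_i (1/q_i) ‖A_i‖² ‖B^i‖²`. -/
theorem sampled_matrix_product_variance (m n p : ℕ)
    (A : Matrix (Fin m) (Fin n) ℝ) (B : Matrix (Fin n) (Fin p) ℝ)
    (q : Fin n → ℝ) (hq : ∀ i, 0 < q i) (hq1 : ∑ i, q i = 1)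
    (s : ℕ) (hs : 0 < s) :
    ∑ f : Fin s → Fin n, (∏ t, q (f t)) *
        (∑ j, ∑ k,
          ((1 / (s : ℝ)) * (∑ t, (1 / q (f t)) * (A j (f t) * B (f t) k))
              - (A * B) j k) ^ 2)
      ≤ (1 / (s : ℝ)) * ∑ i, (1 / q i) * ((∑ j, A j i ^ 2) * (∑ k, B i k ^ 2)) := by
  have hq0 : ∀ i, q i ≠ 0 := fun i => (hq i).ne'
  have hsnn : (0:ℝ) ≤ 1 / (s : ℝ) := by positivity
  -- abbreviate the per-entry sample value
  set g : Fin m → Fin p → Fin n → ℝ :=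
    fun j k i => (1 / q i) * (A j i * B i k) with hg
  have hμ : ∀ j k, (A * B) j k = ∑ i, q i * g j k i := by
    intro j k
    rw [Matrix.mul_apply]
    refine Finset.sum_congr rfl fun i _ => ?_
    simp only [hg]
    field_simp [hq0]
  -- distribute the weight over the entries and swap sums
  have lhs_eq : ∑ f : Fin s → Fin n, (∏ t, q (f t)) *
        (∑ j, ∑ k,
          ((1 / (s : ℝ)) * (∑ t, (1 / q (f t)) * (A j (f t) * B (f t) k))
              - (A * B) j k) ^ 2)
      = ∑ j, ∑ k, ∑ f : Fin s → Fin n, (∏ t, q (f t)) *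
          ((1 / (s : ℝ)) * (∑ t, g j k (f t)) - ∑ i, q i * g j k i) ^ 2 := by
    simp only [Finset.mul_sum, hμ]
    exact Finset.sum_comm.trans (Finset.sum_congr rfl fun j _ => Finset.sum_comm)
  rw [lhs_eq]
  have step : ∀ (j : Fin m) (k : Fin p),
      (∑ f : Fin s → Fin n, (∏ t, q (f t)) *
          ((1 / (s : ℝ)) * (∑ t, g j k (f t)) - ∑ i, q i * g j k i) ^ 2)
        ≤ (1 / (s : ℝ)) * ∑ i, q i * g j k i ^ 2 := by
    intro j k
    rw [key_var hs q (g j k) hq1]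
    exact mul_le_mul_of_nonneg_left (sub_le_self _ (sq_nonneg _)) hsnn
  have hterm : ∀ (j : Fin m) (k : Fin p) (i : Fin n),
      q i * g j k i ^ 2 = (1 / q i) * (A j i ^ 2 * B i k ^ 2) := by
    intro j k i
    have h1 : (1 / q i) ^ 2 * q i = 1 / q i := by
      field_simp
    calc q i * g j k i ^ 2
        = (1 / q i) ^ 2 * q i * (A j i * B i k) ^ 2 := by simp only [hg]; ring
      _ = (1 / q i) * (A j i ^ 2 * B i k ^ 2) := by rw [h1]; ring
  calc ∑ j, ∑ k, ∑ f : Fin s → Fin n, (∏ t, q (f t)) *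
          ((1 / (s : ℝ)) * (∑ t, g j k (f t)) - ∑ i, q i * g j k i) ^ 2
      ≤ ∑ j, ∑ k, ((1 / (s : ℝ)) * ∑ i, q i * g j k i ^ 2) :=
        Finset.sum_le_sum fun j _ => Finset.sum_le_sum fun k _ => step j k
    _ = (1 / (s : ℝ)) * ∑ i, (1 / q i) * ((∑ j, A j i ^ 2) * (∑ k, B i k ^ 2)) := by
        simp only [hterm]
        simp only [← Finset.mul_sum]
        rw [triple_swap (fun i => 1 / q i) (fun j i => A j i ^ 2) (fun i k => B i k ^ 2)]
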